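/- For all λ, β ∈ ℤ⁴ with λ₁ ≥ λ₂ ≥ λ₃ ≥ λ₄, λ₁+λ₂+λ₃+λ₄ = 0 and β₁+β₂+β₃+β₄ = 0, the number of Gelfand–Tsetlin patterns with top row λ and weight β equals the number of 12-tuples (x₁,…,x₁₂) ∈ ℕ¹² satisfying the nine equations: x₂ + x₃ + x₄ = λ₁ + β₁ + β₂ + β₃; x₁ − x₂ + x₃ + x₅ = λ₂ − λ₃; x₂ + x₆ = λ₁ − λ₂; x₃ + x₇ = λ₂ − λ₃; −x₂ − x₃ + x₈ = λ₂ + 2λ₃ − β₁ − β₂ − β₃; −x₁ − 2x₃ + x₉ = 2λ₃ − β₁ − β₂; −x₁ − x₃ + x₁₀ = λ₃ − β₁; −x₁ − x₃ + x₁₁ = λ₃ − β₂; x₁ − x₂ + x₁₂ = λ₂ − β₃. (This is the explicit single-partition-function expression m_λ(β) = φ_{E₄}(B₄(λ,β)) for sl₄.) -/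

import Mathlib

/-- A Gelfand–Tsetlin pattern with top row `lam : Fin k → ℤ`, encoded as a function
`x : ℕ → ℕ → ℤ` where row `i` (for `i < k`) has entries `x i 0, …, x i i`
(so row `i` is the row of length `i+1` of the pattern, the top row being row `k-1`),
and all entries outside the triangle are `0`. -/
def IsGTPattern (k : ℕ) (lam : Fin k → ℤ) (x : ℕ → ℕ → ℤ) : Prop :=
  (∀ j : Fin k, x (k - 1) j.1 = lam j) ∧
  (∀ i j : ℕ, i + 1 < k → j ≤ i →
      x i j ≤ x (i + 1) j ∧ x (i + 1) (j + 1) ≤ x i j) ∧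
  (∀ i j : ℕ, k ≤ i ∨ i < j → x i j = 0)

/-- The pattern `x` has weight `beta`: the sum of the row of length `m+1`
equals `beta 0 + ⋯ + beta m`. -/
def GTHasWeight (k : ℕ) (beta : Fin k → ℤ) (x : ℕ → ℕ → ℤ) : Prop :=
  ∀ m : Fin k, (∑ j ∈ Finset.range (m.1 + 1), x m.1 j)
    = ∑ j : Fin k, if j.1 ≤ m.1 then beta j else 0

/-- The weight multiplicity `m_λ(β)`: the number of Gelfand–Tsetlin patterns with
top row `lam` and weight `beta`. -/
noncomputable def gtMult (k : ℕ) (lam beta : Fin k → ℤ) : ℕ :=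
  Set.ncard {x : ℕ → ℕ → ℤ | IsGTPattern k lam x ∧ GTHasWeight k beta x}

/-- Component map sending a GT pattern (for `k = 4`) to the tuple of its twelve
interlacing differences. -/
def gtToTuple (x : ℕ → ℕ → ℤ) : Fin 12 → ℕ := fun k =>
  match k.1 with
  | 0 => (x 1 0 - x 2 1).toNat
  | 1 => (x 2 0 - x 3 1).toNat
  | 2 => (x 2 1 - x 3 2).toNat
  | 3 => (x 2 2 - x 3 3).toNat
  | 4 => (x 2 0 - x 1 0).toNat
  | 5 => (x 3 0 - x 2 0).toNat
  | 6 => (x 3 1 - x 2 1).toNat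
  | 7 => (x 3 2 - x 2 2).toNat
  | 8 => (x 2 1 - x 1 1).toNat
  | 9 => (x 1 0 - x 0 0).toNat
  | 10 => (x 0 0 - x 1 1).toNat
  | _ => (x 1 1 - x 2 2).toNat

/-- Explicit triangular array built from ten values. -/
def pat (v00 v10 v11 v20 v21 v22 v30 v31 v32 v33 : ℤ) (i j : ℕ) : ℤ :=
  if i = 0 ∧ j = 0 then v00 else
  if i = 1 ∧ j = 0 then v10 else
  if i = 1 ∧ j = 1 then v11 else
  if i = 2 ∧ j = 0 then v20 else
  if i = 2 ∧ j = 1 then v21 else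
  if i = 2 ∧ j = 2 then v22 else
  if i = 3 ∧ j = 0 then v30 else
  if i = 3 ∧ j = 1 then v31 else
  if i = 3 ∧ j = 2 then v32 else
  if i = 3 ∧ j = 3 then v33 else 0

section PatEval
variable (v00 v10 v11 v20 v21 v22 v30 v31 v32 v33 : ℤ)
@[simp] lemma pat_00 : pat v00 v10 v11 v20 v21 v22 v30 v31 v32 v33 0 0 = v00 := rfl
@[simp] lemma pat_10 : pat v00 v10 v11 v20 v21 v22 v30 v31 v32 v33 1 0 = v10 := rfl
@[simp] lemma pat_11 : pat v00 v10 v11 v20 v21 v22 v30 v31 v32 v33 1 1 = v11 := rfl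
@[simp] lemma pat_20 : pat v00 v10 v11 v20 v21 v22 v30 v31 v32 v33 2 0 = v20 := rfl
@[simp] lemma pat_21 : pat v00 v10 v11 v20 v21 v22 v30 v31 v32 v33 2 1 = v21 := rfl
@[simp] lemma pat_22 : pat v00 v10 v11 v20 v21 v22 v30 v31 v32 v33 2 2 = v22 := rfl
@[simp] lemma pat_30 : pat v00 v10 v11 v20 v21 v22 v30 v31 v32 v33 3 0 = v30 := rfl
@[simp] lemma pat_31 : pat v00 v10 v11 v20 v21 v22 v30 v31 v32 v33 3 1 = v31 := rfl
@[simp] lemma pat_32 : pat v00 v10 v11 v20 v21 v22 v30 v31 v32 v33 3 2 = v32 := rfl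
@[simp] lemma pat_33 : pat v00 v10 v11 v20 v21 v22 v30 v31 v32 v33 3 3 = v33 := rfl

lemma pat_zero : ∀ i j : ℕ, 4 ≤ i ∨ i < j →
    pat v00 v10 v11 v20 v21 v22 v30 v31 v32 v33 i j = 0 := by
  intro i j h
  unfold pat
  rw [if_neg (by omega), if_neg (by omega), if_neg (by omega), if_neg (by omega),
    if_neg (by omega), if_neg (by omega), if_neg (by omega), if_neg (by omega),
    if_neg (by omega), if_neg (by omega)]

lemma gtToTuple_pat :
    gtToTuple (pat v00 v10 v11 v20 v21 v22 v30 v31 v32 v33) =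
      ![(v10 - v21).toNat, (v20 - v31).toNat, (v21 - v32).toNat,
        (v22 - v33).toNat, (v20 - v10).toNat, (v30 - v20).toNat,
        (v31 - v21).toNat, (v32 - v22).toNat, (v21 - v11).toNat,
        (v10 - v00).toNat, (v00 - v11).toNat, (v11 - v22).toNat] := by
  funext k
  fin_cases k <;> rfl
end PatEval

lemma pat_spec (lam beta : Fin 4 → ℤ) (a b c d e f : ℤ)
    (hf : f = beta 0) (hde : d + e = beta 0 + beta 1)
    (habc : a + b + c = beta 0 + beta 1 + beta 2)
    (i1 : a ≤ lam 0) (i2 : lam 1 ≤ a) (i3 : b ≤ lam 1) (i4 : lam 2 ≤ b)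
    (i5 : c ≤ lam 2) (i6 : lam 3 ≤ c) (i7 : d ≤ a) (i8 : b ≤ d) (i9 : e ≤ b)
    (i10 : c ≤ e) (i11 : f ≤ d) (i12 : e ≤ f)
    (hlb : lam 0 + lam 1 + lam 2 + lam 3 = beta 0 + beta 1 + beta 2 + beta 3) :
    IsGTPattern 4 lam (pat f d e a b c (lam 0) (lam 1) (lam 2) (lam 3)) ∧
      GTHasWeight 4 beta (pat f d e a b c (lam 0) (lam 1) (lam 2) (lam 3)) := by
  refine ⟨⟨?_, ?_, pat_zero _ _ _ _ _ _ _ _ _ _⟩, ?_⟩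
  · intro j
    fin_cases j <;> simp
  · intro i j hi hj
    have hi' : i ≤ 2 := by omega
    interval_cases i <;> interval_cases j <;> constructor <;>
      (norm_num; try linarith)
  · intro m
    fin_cases m <;>
      simp [Fin.sum_univ_four, Finset.sum_range_succ,
        show ((0:Fin 4):ℕ) = 0 from rfl, show ((1:Fin 4):ℕ) = 1 from rfl,
        show ((2:Fin 4):ℕ) = 2 from rfl, show ((3:Fin 4):ℕ) = 3 from rfl] <;>
      linarith


set_option maxHeartbeats 2000000 in
lemma tuple_mem_image (lam beta : Fin 4 → ℤ)
    (hl : lam 0 + lam 1 + lam 2 + lam 3 = 0)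
    (hb : beta 0 + beta 1 + beta 2 + beta 3 = 0)
    (y : Fin 12 → ℕ)
    (e1 : (y 1 : ℤ) + (y 2 : ℤ) + (y 3 : ℤ) = lam 0 + beta 0 + beta 1 + beta 2)
    (e2 : (y 0 : ℤ) - (y 1 : ℤ) + (y 2 : ℤ) + (y 4 : ℤ) = lam 1 - lam 2)
    (e3 : (y 1 : ℤ) + (y 5 : ℤ) = lam 0 - lam 1)
    (e4 : (y 2 : ℤ) + (y 6 : ℤ) = lam 1 - lam 2)
    (e5 : -(y 1 : ℤ) - (y 2 : ℤ) + (y 7 : ℤ)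
        = lam 1 + 2 * lam 2 - beta 0 - beta 1 - beta 2)
    (e6 : -(y 0 : ℤ) - 2 * (y 2 : ℤ) + (y 8 : ℤ) = 2 * lam 2 - beta 0 - beta 1)
    (e7 : -(y 0 : ℤ) - (y 2 : ℤ) + (y 9 : ℤ) = lam 2 - beta 0)
    (e8 : -(y 0 : ℤ) - (y 2 : ℤ) + (y 10 : ℤ) = lam 2 - beta 1)
    (e9 : (y 0 : ℤ) - (y 1 : ℤ) + (y 11 : ℤ) = lam 1 - beta 2) :
    ∃ x : ℕ → ℕ → ℤ,
      (IsGTPattern 4 lam x ∧ GTHasWeight 4 beta x) ∧ gtToTuple x = y := by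
  have n0 : (0:ℤ) ≤ y 0 := Int.natCast_nonneg _
  have n1 : (0:ℤ) ≤ y 1 := Int.natCast_nonneg _
  have n2 : (0:ℤ) ≤ y 2 := Int.natCast_nonneg _
  have n3 : (0:ℤ) ≤ y 3 := Int.natCast_nonneg _
  have n4 : (0:ℤ) ≤ y 4 := Int.natCast_nonneg _
  have n5 : (0:ℤ) ≤ y 5 := Int.natCast_nonneg _
  have n6 : (0:ℤ) ≤ y 6 := Int.natCast_nonneg _
  have n7 : (0:ℤ) ≤ y 7 := Int.natCast_nonneg _
  have n8 : (0:ℤ) ≤ y 8 := Int.natCast_nonneg _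
  have n9 : (0:ℤ) ≤ y 9 := Int.natCast_nonneg _
  have n10 : (0:ℤ) ≤ y 10 := Int.natCast_nonneg _
  have n11 : (0:ℤ) ≤ y 11 := Int.natCast_nonneg _
  refine ⟨pat (beta 0) ((y 0 : ℤ) + (y 2 : ℤ) + lam 2)
      (beta 0 + beta 1 - ((y 0 : ℤ) + (y 2 : ℤ) + lam 2))
      ((y 1 : ℤ) + lam 1) ((y 2 : ℤ) + lam 2)
      (beta 0 + beta 1 + beta 2 - ((y 1 : ℤ) + lam 1) - ((y 2 : ℤ) + lam 2))
      (lam 0) (lam 1) (lam 2) (lam 3),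
    pat_spec lam beta _ _ _ _ _ _ rfl (by ring) (by ring)
      (by linarith) (by linarith) (by linarith) (by linarith)
      (by linarith) (by linarith) (by linarith) (by linarith)
      (by linarith) (by linarith) (by linarith) (by linarith)
      (by linarith), ?_⟩
  have F0 : ∀ h : (0:ℕ) < 12, (⟨0, h⟩ : Fin 12) = 0 := fun _ => rfl
  have F1 : ∀ h : (1:ℕ) < 12, (⟨1, h⟩ : Fin 12) = 1 := fun _ => rfl
  have F2 : ∀ h : (2:ℕ) < 12, (⟨2, h⟩ : Fin 12) = 2 := fun _ => rfl
  have F3 : ∀ h : (3:ℕ) < 12, (⟨3, h⟩ : Fin 12) = 3 := fun _ => rfl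
  have F4 : ∀ h : (4:ℕ) < 12, (⟨4, h⟩ : Fin 12) = 4 := fun _ => rfl
  have F5 : ∀ h : (5:ℕ) < 12, (⟨5, h⟩ : Fin 12) = 5 := fun _ => rfl
  have F6 : ∀ h : (6:ℕ) < 12, (⟨6, h⟩ : Fin 12) = 6 := fun _ => rfl
  have F7 : ∀ h : (7:ℕ) < 12, (⟨7, h⟩ : Fin 12) = 7 := fun _ => rfl
  have F8 : ∀ h : (8:ℕ) < 12, (⟨8, h⟩ : Fin 12) = 8 := fun _ => rfl
  have F9 : ∀ h : (9:ℕ) < 12, (⟨9, h⟩ : Fin 12) = 9 := fun _ => rfl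
  have F10 : ∀ h : (10:ℕ) < 12, (⟨10, h⟩ : Fin 12) = 10 := fun _ => rfl
  have F11 : ∀ h : (11:ℕ) < 12, (⟨11, h⟩ : Fin 12) = 11 := fun _ => rfl
  funext k
  fin_cases k <;>
    (simp only [F0, F1, F2, F3, F4, F5, F6, F7, F8, F9, F10, F11,
      gtToTuple, pat_00, pat_10, pat_11, pat_20, pat_21, pat_22,
      pat_30, pat_31, pat_32, pat_33]; omega)

lemma gt_entries (lam beta : Fin 4 → ℤ) (x : ℕ → ℕ → ℤ)
    (h : IsGTPattern 4 lam x ∧ GTHasWeight 4 beta x) :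
    (x 3 0 = lam 0 ∧ x 3 1 = lam 1 ∧ x 3 2 = lam 2 ∧ x 3 3 = lam 3) ∧
    (x 0 0 = beta 0 ∧ x 1 0 + x 1 1 = beta 0 + beta 1 ∧
      x 2 0 + x 2 1 + x 2 2 = beta 0 + beta 1 + beta 2) ∧
    (x 2 0 ≤ x 3 0 ∧ x 3 1 ≤ x 2 0 ∧ x 2 1 ≤ x 3 1 ∧ x 3 2 ≤ x 2 1 ∧
      x 2 2 ≤ x 3 2 ∧ x 3 3 ≤ x 2 2 ∧
      x 1 0 ≤ x 2 0 ∧ x 2 1 ≤ x 1 0 ∧ x 1 1 ≤ x 2 1 ∧ x 2 2 ≤ x 1 1 ∧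
      x 0 0 ≤ x 1 0 ∧ x 1 1 ≤ x 0 0) := by
  obtain ⟨⟨htop, hint, _⟩, hw⟩ := h
  have h30 := htop 0; have h31 := htop 1; have h32 := htop 2; have h33 := htop 3
  norm_num [show ((0:Fin 4):ℕ) = 0 from rfl, show ((1:Fin 4):ℕ) = 1 from rfl,
    show ((2:Fin 4):ℕ) = 2 from rfl, show ((3:Fin 4):ℕ) = 3 from rfl]
    at h30 h31 h32 h33
  have hw0 := hw 0; have hw1 := hw 1; have hw2 := hw 2
  simp [Fin.sum_univ_four, Finset.sum_range_succ,
    show ((0:Fin 4):ℕ) = 0 from rfl, show ((1:Fin 4):ℕ) = 1 from rfl,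
    show ((2:Fin 4):ℕ) = 2 from rfl, show ((3:Fin 4):ℕ) = 3 from rfl]
    at hw0 hw1 hw2
  have i20 := hint 2 0 (by norm_num) (by norm_num)
  have i21 := hint 2 1 (by norm_num) (by norm_num)
  have i22 := hint 2 2 (by norm_num) (by norm_num)
  have i10 := hint 1 0 (by norm_num) (by norm_num)
  have i11 := hint 1 1 (by norm_num) (by norm_num)
  have i00 := hint 0 0 (by norm_num) (by norm_num)
  norm_num at i20 i21 i22 i10 i11 i00
  exact ⟨⟨h30, h31, h32, h33⟩, ⟨hw0, by linarith, by linarith⟩,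
    i20.1, i20.2, i21.1, i21.2, i22.1, i22.2, i10.1, i10.2, i11.1, i11.2,
    i00.1, i00.2⟩

theorem sl4_multiplicity_eq_partition_function (lam beta : Fin 4 → ℤ)
    (h01 : lam 1 ≤ lam 0) (h12 : lam 2 ≤ lam 1) (h23 : lam 3 ≤ lam 2)
    (hl : lam 0 + lam 1 + lam 2 + lam 3 = 0)
    (hb : beta 0 + beta 1 + beta 2 + beta 3 = 0) :
    gtMult 4 lam beta =
      Set.ncard {x : Fin 12 → ℕ |
        (x 1 : ℤ) + (x 2 : ℤ) + (x 3 : ℤ) = lam 0 + beta 0 + beta 1 + beta 2 ∧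
        (x 0 : ℤ) - (x 1 : ℤ) + (x 2 : ℤ) + (x 4 : ℤ) = lam 1 - lam 2 ∧
        (x 1 : ℤ) + (x 5 : ℤ) = lam 0 - lam 1 ∧
        (x 2 : ℤ) + (x 6 : ℤ) = lam 1 - lam 2 ∧
        -(x 1 : ℤ) - (x 2 : ℤ) + (x 7 : ℤ)
          = lam 1 + 2 * lam 2 - beta 0 - beta 1 - beta 2 ∧
        -(x 0 : ℤ) - 2 * (x 2 : ℤ) + (x 8 : ℤ) = 2 * lam 2 - beta 0 - beta 1 ∧
        -(x 0 : ℤ) - (x 2 : ℤ) + (x 9 : ℤ) = lam 2 - beta 0 ∧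
        -(x 0 : ℤ) - (x 2 : ℤ) + (x 10 : ℤ) = lam 2 - beta 1 ∧
        (x 0 : ℤ) - (x 1 : ℤ) + (x 11 : ℤ) = lam 1 - beta 2} := by
  classical
  set S : Set (ℕ → ℕ → ℤ) :=
    {x | IsGTPattern 4 lam x ∧ GTHasWeight 4 beta x} with hS
  set T : Set (Fin 12 → ℕ) :=
    {x : Fin 12 → ℕ |
        (x 1 : ℤ) + (x 2 : ℤ) + (x 3 : ℤ) = lam 0 + beta 0 + beta 1 + beta 2 ∧
        (x 0 : ℤ) - (x 1 : ℤ) + (x 2 : ℤ) + (x 4 : ℤ) = lam 1 - lam 2 ∧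
        (x 1 : ℤ) + (x 5 : ℤ) = lam 0 - lam 1 ∧
        (x 2 : ℤ) + (x 6 : ℤ) = lam 1 - lam 2 ∧
        -(x 1 : ℤ) - (x 2 : ℤ) + (x 7 : ℤ)
          = lam 1 + 2 * lam 2 - beta 0 - beta 1 - beta 2 ∧
        -(x 0 : ℤ) - 2 * (x 2 : ℤ) + (x 8 : ℤ) = 2 * lam 2 - beta 0 - beta 1 ∧
        -(x 0 : ℤ) - (x 2 : ℤ) + (x 9 : ℤ) = lam 2 - beta 0 ∧
        -(x 0 : ℤ) - (x 2 : ℤ) + (x 10 : ℤ) = lam 2 - beta 1 ∧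
        (x 0 : ℤ) - (x 1 : ℤ) + (x 11 : ℤ) = lam 1 - beta 2} with hT
  have himg : gtToTuple '' S = T := by
    apply Set.Subset.antisymm
    · rintro _ ⟨x, hx, rfl⟩
      obtain ⟨⟨e30, e31, e32, e33⟩, ⟨w0, w1, w2⟩, q1, q2, q3, q4, q5, q6, q7,
        q8, q9, q10, q11, q12⟩ := gt_entries lam beta x hx
      simp only [hT, Set.mem_setOf_eq, gtToTuple, Fin.coe_ofNat_eq_mod, Nat.reduceMod]
      refine ⟨?_, ?_, ?_, ?_, ?_, ?_, ?_, ?_, ?_⟩ <;> omega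
    · rintro y hy
      simp only [hT, Set.mem_setOf_eq] at hy
      obtain ⟨e1, e2, e3, e4, e5, e6, e7, e8, e9⟩ := hy
      obtain ⟨x, hx, hxy⟩ := tuple_mem_image lam beta hl hb y
        e1 e2 e3 e4 e5 e6 e7 e8 e9
      exact ⟨x, hx, hxy⟩
  have hinj : Set.InjOn gtToTuple S := by
    intro x hx z hz hxz
    obtain ⟨⟨xe30, xe31, xe32, xe33⟩, ⟨xw0, xw1, xw2⟩, xq1, xq2, xq3, xq4, xq5,
      xq6, xq7, xq8, xq9, xq10, xq11, xq12⟩ := gt_entries lam beta x hx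
    obtain ⟨⟨ze30, ze31, ze32, ze33⟩, ⟨zw0, zw1, zw2⟩, zq1, zq2, zq3, zq4, zq5,
      zq6, zq7, zq8, zq9, zq10, zq11, zq12⟩ := gt_entries lam beta z hz
    have h1 := congrFun hxz 1
    have h2 := congrFun hxz 2
    have h9 := congrFun hxz 9
    simp only [gtToTuple, Fin.coe_ofNat_eq_mod, Nat.reduceMod] at h1 h2 h9
    have hzero := hx.1.2.2
    have zzero := hz.1.2.2
    funext i j
    by_cases hc : 4 ≤ i ∨ i < j
    · rw [hzero i j hc, zzero i j hc]
    · push_neg at hc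
      have hi : i ≤ 3 := by omega
      have hj : j ≤ i := hc.2
      interval_cases i <;> interval_cases j <;> omega
  calc gtMult 4 lam beta = S.ncard := rfl
    _ = (gtToTuple '' S).ncard := (Set.ncard_image_of_injOn hinj).symm
    _ = T.ncard := by rw [himg]
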